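/- Convexity of h'/h'': for the function h(x) = ((x+1)/2) ln((x+1)/2) - ((x-1)/2) ln((x-1)/2) defined for x > 1, the ratio φ(x) = h'(x)/h''(x) is strictly convex on (1,∞). -/

import Mathlib

open Real Set

/-- The entropy of a one-mode Gaussian state as a function of the symplectic eigenvalue:
`h(x) = ((x+1)/2) log ((x+1)/2) - ((x-1)/2) log ((x-1)/2)`. -/
noncomputable def hfun (x : ℝ) : ℝ :=
  ((x + 1) / 2) * Real.log ((x + 1) / 2) - ((x - 1) / 2) * Real.log ((x - 1) / 2)

noncomputable def gfun (x : ℝ) : ℝ := ((1 - x^2)/2) * (Real.log (x+1) - Real.log (x-1))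

lemma hderiv (x : ℝ) (hx : 1 < x) :
    HasDerivAt hfun ((Real.log (x+1) - Real.log (x-1))/2) x := by
  have h1 : (0:ℝ) < x + 1 := by linarith
  have h2 : (0:ℝ) < x - 1 := by linarith
  have A : HasDerivAt (fun y : ℝ => (y+1)/2) (1/2) x := by
    simpa using ((hasDerivAt_id x).add_const 1).div_const 2
  have B : HasDerivAt (fun y : ℝ => (y-1)/2) (1/2) x := by
    simpa using ((hasDerivAt_id x).sub_const 1).div_const 2
  have LA : HasDerivAt (fun y : ℝ => Real.log ((y+1)/2)) (((x+1)/2)⁻¹ * (1/2)) x := by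
    simpa [Function.comp_def] using (Real.hasDerivAt_log (show (x+1)/2 ≠ 0 by positivity)).comp x A
  have LB : HasDerivAt (fun y : ℝ => Real.log ((y-1)/2)) (((x-1)/2)⁻¹ * (1/2)) x := by
    simpa [Function.comp_def] using (Real.hasDerivAt_log (show (x-1)/2 ≠ 0 by positivity)).comp x B
  have HA := A.mul LA
  have HB := B.mul LB
  have := HA.sub HB
  refine HasDerivAt.congr_deriv this ?_
  have e1 : Real.log ((x+1)/2) = Real.log (x+1) - Real.log 2 := by
    rw [Real.log_div (by positivity) (by norm_num)]
  have e2 : Real.log ((x-1)/2) = Real.log (x-1) - Real.log 2 := by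
    rw [Real.log_div (by positivity) (by norm_num)]
  rw [e1, e2]
  field_simp
  ring

lemma deriv_hfun_eq (x : ℝ) (hx : 1 < x) :
    deriv hfun x = (Real.log (x+1) - Real.log (x-1))/2 := (hderiv x hx).deriv

lemma Lderiv (x : ℝ) (hx : 1 < x) :
    HasDerivAt (fun y : ℝ => (Real.log (y+1) - Real.log (y-1))/2)
      (-(1/(x^2-1))) x := by
  have h1 : x + 1 ≠ 0 := by positivity
  have h2 : x - 1 ≠ 0 := by intro h; nlinarith
  have A : HasDerivAt (fun y : ℝ => Real.log (y+1)) (1/(x+1)) x := by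
    simpa [Function.comp_def] using (Real.hasDerivAt_log h1).comp x ((hasDerivAt_id x).add_const 1)
  have B : HasDerivAt (fun y : ℝ => Real.log (y-1)) (1/(x-1)) x := by
    simpa [Function.comp_def] using (Real.hasDerivAt_log h2).comp x ((hasDerivAt_id x).sub_const 1)
  have h3 : x^2 - 1 ≠ 0 := by nlinarith
  have := (A.sub B).div_const 2
  refine HasDerivAt.congr_deriv this ?_
  field_simp
  ring

lemma deriv2_hfun_eq (x : ℝ) (hx : 1 < x) :
    deriv (deriv hfun) x = -(1/(x^2-1)) := by
  have hev : deriv hfun =ᶠ[nhds x] (fun y => (Real.log (y+1) - Real.log (y-1))/2) := by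
    filter_upwards [Ioi_mem_nhds hx] with y hy
    exact deriv_hfun_eq y hy
  rw [Filter.EventuallyEq.deriv_eq hev]
  exact (Lderiv x hx).deriv

lemma ratio_eq (x : ℝ) (hx : 1 < x) :
    deriv hfun x / deriv (deriv hfun) x = gfun x := by
  rw [deriv_hfun_eq x hx, deriv2_hfun_eq x hx, gfun]
  have h2 : x^2 - 1 ≠ 0 := by nlinarith
  field_simp
  ring

lemma gderiv (x : ℝ) (hx : 1 < x) :
    HasDerivAt gfun (1 - x * (Real.log (x+1) - Real.log (x-1))) x := by
  have h1 : x + 1 ≠ 0 := by positivity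
  have h2 : x - 1 ≠ 0 := by intro h; nlinarith
  have h3 : x^2 - 1 ≠ 0 := by nlinarith
  have A : HasDerivAt (fun y : ℝ => Real.log (y+1)) (1/(x+1)) x := by
    simpa [Function.comp_def] using (Real.hasDerivAt_log h1).comp x ((hasDerivAt_id x).add_const 1)
  have B : HasDerivAt (fun y : ℝ => Real.log (y-1)) (1/(x-1)) x := by
    simpa [Function.comp_def] using (Real.hasDerivAt_log h2).comp x ((hasDerivAt_id x).sub_const 1)
  have C : HasDerivAt (fun y : ℝ => (1 - y^2)/2) (-x) x := by
    have := ((hasDerivAt_pow 2 x).const_sub 1).div_const 2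
    refine HasDerivAt.congr_deriv this ?_
    simp; ring
  have := C.mul (A.sub B)
  refine HasDerivAt.congr_deriv this ?_
  simp only [Pi.sub_apply]
  field_simp
  ring

lemma gderiv2 (x : ℝ) (hx : 1 < x) :
    deriv (deriv gfun) x
      = 2*x/(x^2-1) - (Real.log (x+1) - Real.log (x-1)) := by
  have h1 : x + 1 ≠ 0 := by positivity
  have h2 : x - 1 ≠ 0 := by intro h; nlinarith
  have h3 : x^2 - 1 ≠ 0 := by nlinarith
  have hev : deriv gfun =ᶠ[nhds x]
      (fun y => 1 - y * (Real.log (y+1) - Real.log (y-1))) := by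
    filter_upwards [Ioi_mem_nhds hx] with y hy
    exact (gderiv y hy).deriv
  rw [Filter.EventuallyEq.deriv_eq hev]
  have A : HasDerivAt (fun y : ℝ => Real.log (y+1)) (1/(x+1)) x := by
    simpa [Function.comp_def] using (Real.hasDerivAt_log h1).comp x ((hasDerivAt_id x).add_const 1)
  have B : HasDerivAt (fun y : ℝ => Real.log (y-1)) (1/(x-1)) x := by
    simpa [Function.comp_def] using (Real.hasDerivAt_log h2).comp x ((hasDerivAt_id x).sub_const 1)
  have D : HasDerivAt (fun y : ℝ => 1 - y * (Real.log (y+1) - Real.log (y-1)))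
      (-(1 * (Real.log (x+1) - Real.log (x-1)) + x * (1/(x+1) - 1/(x-1)))) x :=
    (((hasDerivAt_id x).mul (A.sub B)).const_sub 1)
  rw [D.deriv]
  field_simp
  ring

lemma gderiv2_pos (x : ℝ) (hx : 1 < x) : 0 < deriv (deriv gfun) x := by
  rw [gderiv2 x hx]
  have h2 : (0:ℝ) < x - 1 := by linarith
  have h1 : (0:ℝ) < x + 1 := by linarith
  set t : ℝ := (x+1)/(x-1) with ht
  have htpos : 0 < t := by positivity
  have ht1 : 1 < t := by
    rw [ht, lt_div_iff₀ h2]; linarith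
  have hlog : Real.log (x+1) - Real.log (x-1) = Real.log t := by
    rw [ht, Real.log_div (by linarith) (by linarith)]
  have hs : 0 < Real.log t := Real.log_pos ht1
  have hsinh := Real.self_lt_sinh_iff.mpr hs
  have hexp : Real.exp (Real.log t) = t := Real.exp_log htpos
  rw [Real.sinh_eq, hexp, Real.exp_neg, hexp] at hsinh
  have h2x : (t - t⁻¹)/2 = 2*x/(x^2-1) := by
    rw [ht]
    have h3 : x^2 - 1 ≠ 0 := by nlinarith
    field_simp
    ring
  rw [hlog]
  rw [h2x] at hsinh
  linarith

lemma gfun_strictConvexOn : StrictConvexOn ℝ (Set.Ioi 1) gfun := by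
  apply strictConvexOn_of_deriv2_pos (convex_Ioi 1)
  · intro x hx
    exact (gderiv x hx).continuousAt.continuousWithinAt
  · intro x hx
    rw [interior_Ioi] at hx
    show 0 < deriv (deriv gfun) x
    exact gderiv2_pos x hx

/-- The ratio `h'/h''` is strictly convex on `(1,∞)`. -/
theorem hderiv_ratio_strictConvexOn :
    StrictConvexOn ℝ (Set.Ioi 1) (fun x : ℝ => deriv hfun x / deriv (deriv hfun) x) := by
  obtain ⟨hconv, hstrict⟩ := gfun_strictConvexOn
  refine ⟨hconv, fun x hx y hy hxy a b ha hb hab => ?_⟩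
  simp only
  rw [ratio_eq x hx, ratio_eq y hy]
  have hmem : a • x + b • y ∈ Set.Ioi 1 := hconv hx hy ha.le hb.le hab
  rw [ratio_eq _ hmem]
  exact hstrict hx hy hxy ha hb hab
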